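/- arXiv:1606.01891 — 3 statements merged into one kernel-verified Lean document; each statement's English description precedes it below -/
import Mathlib

section
/- Let ġ be a finite-dimensional simple complex Lie algebra with Cartan subalgebra ḣ spanned by coroots h_1,…,h_l, and let g = (ġ ⊗ ℂ[t,t^{-1}]) ⊕ ℂK ⊕ ℂd be the associated untwisted affine Kac-Moody algebra, with Cartan subalgebra h = ℂh_1 + ⋯ + ℂh_l + ℂK + ℂd. Suppose M is a g-module that is free of rank 1 over U(h), identified with ℂ[h_1,…,h_l,K,d], and set R_{ik} = (h_i ⊗ t^k)·1 ∈ M. Then for every g ∈ M and every integer k, (h_i ⊗ t^k)·g = τ^k(g)·R_{ik}, where τ is the ℂ-algebra automorphism of ℂ[h_1,…,h_l,K,d] sending d to d−1 and fixing h_1,…,h_l,K. -/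
open scoped BigOperators
open MvPolynomial

namespace KM

/-- The untwisted affine Kac-Moody algebra
`L = (ġ ⊗ ℂ[t,t⁻¹]) ⊕ ℂK ⊕ ℂd` attached to a finite dimensional simple
complex Lie algebra `ġ` with invariant bilinear form `B`:
`T k x` plays the role of `x ⊗ t^k`, and the bracket is
`[x⊗t^k + λ₁K + μ₁d, y⊗t^m + λ₂K + μ₂d] = [x,y]⊗t^{k+m} + μ₁ m y⊗t^m − μ₂ k x⊗t^k + k δ_{k,−m} B(x,y) K`.
`Hd` is a Cartan subalgebra of `ġ` with basis `bas = (h_1, …, h_l)`, so that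
`h = ℂh_1 + ⋯ + ℂh_l + ℂK + ℂd` is the Cartan subalgebra of `L`. -/
structure UntwistedAffine (l : ℕ) where
  gd : Type
  [gdLR : LieRing gd]
  [gdLA : LieAlgebra ℂ gd]
  [gdFD : FiniteDimensional ℂ gd]
  gdSimple : LieAlgebra.IsSimple ℂ gd
  B : gd →ₗ[ℂ] gd →ₗ[ℂ] ℂ
  Bsymm : ∀ x y : gd, B x y = B y x
  Binv : ∀ x y z : gd, B ⁅x, y⁆ z = B x ⁅y, z⁆
  L : Type
  [LLR : LieRing L]
  [LLA : LieAlgebra ℂ L]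
  T : ℤ → gd →ₗ[ℂ] L
  K : L
  d : L
  indep : ∀ (s : Finset ℤ) (x : ℤ → gd) (c₁ c₂ : ℂ),
    (∑ k ∈ s, T k (x k)) + c₁ • K + c₂ • d = 0 → (∀ k ∈ s, x k = 0) ∧ c₁ = 0 ∧ c₂ = 0
  span : Submodule.span ℂ ({K, d} ∪ ⋃ k : ℤ, Set.range (T k)) = ⊤
  lie_T_T : ∀ (k m : ℤ) (x y : gd),
    ⁅T k x, T m y⁆ = T (k + m) ⁅x, y⁆ + (if k + m = 0 then (k : ℂ) * B x y else 0) • K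
  lie_K_T : ∀ (k : ℤ) (x : gd), ⁅K, T k x⁆ = 0
  lie_K_d : ⁅K, d⁆ = 0
  lie_d_T : ∀ (k : ℤ) (x : gd), ⁅d, T k x⁆ = (k : ℂ) • T k x
  Hd : LieSubalgebra ℂ gd
  HdCartan : Hd.IsCartanSubalgebra
  HdAbelian : ∀ x y : Hd, ⁅x, y⁆ = 0
  bas : Module.Basis (Fin l) ℂ Hd

attribute [instance] UntwistedAffine.gdLR UntwistedAffine.gdLA UntwistedAffine.gdFD
  UntwistedAffine.LLR UntwistedAffine.LLA

attribute [local instance] LieRing.ofAssociativeRing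

/-- The module `U(h)` identified with the polynomial ring
`ℂ[h_1,…,h_l,K,d]`: variable `Sum.inl i` is `h_i`, `Sum.inr false` is `K`
and `Sum.inr true` is `d`. -/
abbrev AffPoly (l : ℕ) := MvPolynomial (Fin l ⊕ Bool) ℂ

/-- Multiplication by a polynomial, as an endomorphism. -/
noncomputable def affMul {l : ℕ} (p : AffPoly l) : Module.End ℂ (AffPoly l) :=
  LinearMap.mulLeft ℂ p

/-- `τ^k` : the automorphism of `ℂ[h_1,…,h_l,K,d]` sending `d ↦ d - k` and fixing
all other variables. -/
noncomputable def tau (l : ℕ) (k : ℤ) : AffPoly l →ₐ[ℂ] AffPoly l :=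
  aeval (fun j => X j - if j = Sum.inr true then C (k : ℂ) else 0)

/-- Lemma 4: let `M ∈ H(g)` for the untwisted affine Kac-Moody algebra `g`,
identified with `ℂ[h_1,…,h_l,K,d]` (so that `h_i`, `K`, `d` act by
multiplication), and set `R_{ik} = (h_i ⊗ t^k)·1`.  Then
`(h_i ⊗ t^k) · g = τ^k(g) · R_{ik}` for all `g ∈ M`, where `τ(d) = d - 1` and
`τ` fixes `h_1,…,h_l,K`. -/
theorem affine_loop_action (l : ℕ) (U : UntwistedAffine l)
    (ρ : U.L →ₗ⁅ℂ⁆ Module.End ℂ (AffPoly l))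
    (hH : ∀ i : Fin l, ρ (U.T 0 (U.bas i)) = affMul (X (Sum.inl i)))
    (hK : ρ U.K = affMul (X (Sum.inr false)))
    (hd : ρ U.d = affMul (X (Sum.inr true))) :
    ∀ (i : Fin l) (k : ℤ) (g : AffPoly l),
      ρ (U.T k (U.bas i)) g = tau l k g * (ρ (U.T k (U.bas i)) 1) := by
  intro i k g
  set A := ρ (U.T k (U.bas i)) with hA
  -- A commutes with multiplication by each h_j
  have hcommH : ∀ (j : Fin l) (q : AffPoly l),
      A (X (Sum.inl j) * q) = X (Sum.inl j) * A q := by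
    intro j q
    have h0 : ⁅U.T 0 (U.bas j : U.gd), U.T k (U.bas i : U.gd)⁆ = 0 := by
      rw [U.lie_T_T]
      have hb : ⁅(U.bas j : U.gd), (U.bas i : U.gd)⁆ = 0 := by
        exact_mod_cast congrArg (Subtype.val) (U.HdAbelian (U.bas j) (U.bas i))
      rw [hb]
      simp
    have hlie := ρ.map_lie (x := U.T 0 (U.bas j : U.gd)) (y := U.T k (U.bas i : U.gd))
    rw [h0, map_zero ρ] at hlie
    have h1 := congrFun (congrArg (fun f : Module.End ℂ (AffPoly l) => f.toFun) hlie) q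
    simp only [Ring.lie_def, hH j, affMul, LinearMap.zero_apply, LinearMap.sub_apply,
      Module.End.mul_apply, LinearMap.mulLeft_apply, LinearMap.coe_mk, AddHom.coe_mk,
      LinearMap.sub_apply] at h1
    have h2 : (0 : AffPoly l) = X (Sum.inl j) * A q - A (X (Sum.inl j) * q) := by
      simpa using h1
    linear_combination h2
  -- A commutes with multiplication by K
  have hcommK : ∀ (q : AffPoly l),
      A (X (Sum.inr false) * q) = X (Sum.inr false) * A q := by
    intro q
    have h0 : ⁅U.K, U.T k (U.bas i : U.gd)⁆ = 0 := U.lie_K_T k _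
    have hlie := ρ.map_lie (x := U.K) (y := U.T k (U.bas i : U.gd))
    rw [h0, map_zero ρ] at hlie
    have h1 := congrFun (congrArg (fun f : Module.End ℂ (AffPoly l) => f.toFun) hlie) q
    simp only [Ring.lie_def, hK, affMul, LinearMap.zero_apply, LinearMap.sub_apply,
      Module.End.mul_apply, LinearMap.mulLeft_apply, LinearMap.coe_mk, AddHom.coe_mk] at h1
    have h2 : (0 : AffPoly l) = X (Sum.inr false) * A q - A (X (Sum.inr false) * q) := by
      simpa using h1
    linear_combination h2
  -- commutation with d
  have hcommd : ∀ (q : AffPoly l),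
      A (X (Sum.inr true) * q) = (X (Sum.inr true) - C (k : ℂ)) * A q := by
    intro q
    have h0 : ⁅U.d, U.T k (U.bas i : U.gd)⁆ = (k : ℂ) • U.T k (U.bas i : U.gd) :=
      U.lie_d_T k _
    have hlie := ρ.map_lie (x := U.d) (y := U.T k (U.bas i : U.gd))
    rw [h0, map_smul ρ] at hlie
    have h1 := congrFun (congrArg (fun f : Module.End ℂ (AffPoly l) => f.toFun) hlie) q
    simp only [Ring.lie_def, hd, affMul, LinearMap.smul_apply, LinearMap.sub_apply,
      Module.End.mul_apply, LinearMap.mulLeft_apply, LinearMap.coe_mk, AddHom.coe_mk] at h1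
    have h2 : (k : ℂ) • A q = X (Sum.inr true) * A q - A (X (Sum.inr true) * q) := by
      simpa using h1
    rw [MvPolynomial.smul_eq_C_mul] at h2
    linear_combination h2
  -- tau on X
  have htauX : ∀ j, tau l k (X j : AffPoly l)
      = X j - if j = Sum.inr true then C (k : ℂ) else 0 := by
    intro j; simp [tau]
  induction g using MvPolynomial.induction_on with
  | C a =>
      have h1 : (C a : AffPoly l) = a • (1 : AffPoly l) := by
        rw [MvPolynomial.smul_eq_C_mul, mul_one]
      rw [h1, map_smul, map_smul]
      simp [MvPolynomial.smul_eq_C_mul, mul_assoc]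
  | add p q hp hq =>
      rw [map_add, map_add, hp, hq, add_mul]
  | mul_X p j hp =>
      rw [mul_comm p (X j), map_mul (tau l k), htauX j]
      rcases j with j | b
      · rw [if_neg (by simp), hcommH j p, hp]
        ring
      · cases b
        · rw [if_neg (by simp), hcommK p, hp]
          ring
        · rw [if_pos rfl, hcommd p, hp]
          ring

end KM
end

section
/- Let g be the Kac-Moody algebra associated to an invertible generalized Cartan matrix A(r,s) = [[2,−r],[−s,2]], with Cartan subalgebra h having basis (H_1,H_2)^T = A^{-1}(α_1^∨,α_2^∨)^T, so that [H_i,e_j] = δ_{ij}e_j and [H_i,f_j] = −δ_{ij}f_j. If M is a g-module whose restriction to h is free of rank 1 over U(h), identified with ℂ[H_1,H_2], then there exist nonzero polynomials E_i = e_i·1 and F_i = f_i·1 in ℂ[H_1,H_2] such that for all g ∈ ℂ[H_1,H_2] and i ∈ {1,2}: H_i·g = H_i g, e_i·g = E_i σ_i(g), and f_i·g = F_i σ_i^{-1}(g), where σ_i is the ℂ-algebra automorphism of ℂ[H_1,H_2] sending H_j to H_j − δ_{i,j}. -/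
open scoped BigOperators
open MvPolynomial

attribute [local instance 100] LieRing.ofAssociativeRing

namespace KM

structure GCM (n : ℕ) where
  A : Matrix (Fin n) (Fin n) ℤ
  diag : ∀ i, A i i = 2
  offdiag : ∀ i j, i ≠ j → A i j ≤ 0
  zero_symm : ∀ i j, A i j = 0 → A j i = 0

def GCM.Indecomposable {n : ℕ} (g : GCM n) : Prop :=
  ∀ s : Set (Fin n), (∀ i ∈ s, ∀ j, j ∉ s → g.A i j = 0) → s = ∅ ∨ s = Set.univ

/-- The data of a Kac-Moody algebra `g(A)` on a complex Lie algebra `L`: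
an abelian Cartan subalgebra of dimension `2n - rank A`, linearly independent
simple roots and coroots realizing `A`, Chevalley generators `e i`, `f i`
satisfying the defining relations, such that `L` is generated by them and
every ideal intersecting the Cartan subalgebra trivially is zero (this
characterizes `g(A) = g̃(A)/𝔱` up to isomorphism). -/
structure KacMoodyData {n : ℕ} (g : GCM n) (L : Type) [LieRing L] [LieAlgebra ℂ L] where
  H : LieSubalgebra ℂ L
  abelian : ∀ x y : H, ⁅x, y⁆ = 0
  hdim : Module.finrank ℂ H = 2 * n - (g.A.map ((↑) : ℤ → ℚ)).rank
  root : Fin n → (H →ₗ[ℂ] ℂ)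
  coroot : Fin n → H
  root_indep : LinearIndependent ℂ root
  coroot_indep : LinearIndependent ℂ coroot
  pairing : ∀ i j, root j (coroot i) = (g.A i j : ℂ)
  e : Fin n → L
  f : Fin n → L
  lie_h_e : ∀ (x : H) (i : Fin n), ⁅(x : L), e i⁆ = root i x • e i
  lie_h_f : ∀ (x : H) (i : Fin n), ⁅(x : L), f i⁆ = -(root i x) • f i
  lie_e_f : ∀ i j, ⁅e i, f j⁆ = if i = j then ((coroot i : L)) else 0
  generates : LieSubalgebra.lieSpan ℂ L ((H : Set L) ∪ Set.range e ∪ Set.range f) = ⊤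
  ideal_triv : ∀ I : LieIdeal ℂ L, (∀ x : H, (x : L) ∈ I → x = 0) → I = ⊥

/-- An object of the category `H(g)`: a `g`-module whose restriction to the
Cartan subalgebra `H` is a free `U(H)`-module of rank 1. -/
structure HObject (L : Type) [LieRing L] [LieAlgebra ℂ L] (H : LieSubalgebra ℂ L) where
  M : Type
  [iAdd : AddCommGroup M]
  [iMod : Module ℂ M]
  [iLRM : LieRingModule L M]
  [iLM : LieModule ℂ L M]
  free : ∃ v : M, Function.Bijective (fun u : UniversalEnvelopingAlgebra ℂ H =>
    (UniversalEnvelopingAlgebra.lift ℂ ((LieModule.toEnd ℂ L M).comp H.incl) u) v)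

/-- The basis `(H_1, …, H_n)ᵀ = A⁻¹ (α_1^∨, …, α_n^∨)ᵀ` of the Cartan subalgebra. -/
noncomputable def Hb {n : ℕ} {g : GCM n} {L : Type} [LieRing L] [LieAlgebra ℂ L]
    (D : KacMoodyData g L) (i : Fin n) : L :=
  ∑ j, ((g.A.map ((↑) : ℤ → ℂ))⁻¹ i j) • ((D.coroot j : L))

/-- Multiplication by the variable `X i` as an endomorphism of `ℂ[H_1,…,H_n]`. -/
noncomputable def mulX {n : ℕ} (i : Fin n) :
    Module.End ℂ (MvPolynomial (Fin n) ℂ) :=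
  LinearMap.mulLeft ℂ (X i)

/-- The substitution `H_j ↦ H_j - c·δ_{ij}` as an endomorphism; `shiftOp i 1 = σ_i`,
`shiftOp i (-1) = σ_i⁻¹`. -/
noncomputable def shiftOp {n : ℕ} (i : Fin n) (c : ℂ) :
    Module.End ℂ (MvPolynomial (Fin n) ℂ) :=
  (aeval (fun j => X j - if j = i then C c else 0) :
    MvPolynomial (Fin n) ℂ →ₐ[ℂ] MvPolynomial (Fin n) ℂ).toLinearMap

lemma twist_formula {n : ℕ} (i : Fin n) (c : ℂ) (E : Module.End ℂ (MvPolynomial (Fin n) ℂ))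
    (h : ∀ (j : Fin n) (p : MvPolynomial (Fin n) ℂ),
      E (X j * p) = (X j - if j = i then C c else 0) * E p) :
    ∀ p, E p = E 1 * shiftOp i c p := by
  intro p
  induction p using MvPolynomial.induction_on with
  | C a =>
      have h1 : (C a : MvPolynomial (Fin n) ℂ) = a • 1 := by
        rw [smul_eq_C_mul, mul_one]
      rw [h1, map_smul, map_smul, smul_eq_C_mul, smul_eq_C_mul]
      simp [shiftOp]
      ring
  | add p q hp hq => rw [map_add, map_add, mul_add, hp, hq]
  | mul_X p j hp =>
      rw [mul_comm, h j p, hp]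
      have : shiftOp i c (p * X j) = shiftOp i c p * (X j - if j = i then C c else 0) := by
        simp [shiftOp]
      rw [mul_comm (X j) p, this]; ring

/-- Lemma 6: let `g` be the Kac-Moody algebra of the invertible generalized
Cartan matrix `A(r,s) = [[2,−r],[−s,2]]` (`r,s` positive, `rs ≠ 4`), with Cartan
basis `(H_1,H_2)ᵀ = A⁻¹(α_1^∨,α_2^∨)ᵀ`.  If `M` is a `g`-module which is free of
rank 1 over `U(h)`, identified with `ℂ[H_1,H_2]` (so each `H_i` acts by
multiplication), then with `E_i = e_i·1 ≠ 0` and `F_i = f_i·1 ≠ 0` one has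
`H_i·g = H_i g`, `e_i·g = E_i σ_i(g)` and `f_i·g = F_i σ_i⁻¹(g)` for all
`g ∈ ℂ[H_1,H_2]`. -/
theorem rank_two_twisted_action (r s : ℤ) (hr : 0 < r) (hs : 0 < s)
    (hrs : r * s ≠ 4)
    (g : GCM 2) (hA : g.A = !![2, -r; -s, 2])
    (L : Type) [LieRing L] [LieAlgebra ℂ L] (D : KacMoodyData g L)
    (ρ : L →ₗ⁅ℂ⁆ Module.End ℂ (MvPolynomial (Fin 2) ℂ))
    (hH : ∀ i : Fin 2, ρ (Hb D i) = mulX i) :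
    ∀ i : Fin 2,
      ρ (D.e i) 1 ≠ 0 ∧ ρ (D.f i) 1 ≠ 0 ∧
      ∀ p : MvPolynomial (Fin 2) ℂ,
        ρ (D.e i) p = ρ (D.e i) 1 * shiftOp i 1 p ∧
        ρ (D.f i) p = ρ (D.f i) 1 * shiftOp i (-1) p := by
  set Ac : Matrix (Fin 2) (Fin 2) ℂ := g.A.map ((↑) : ℤ → ℂ) with hAc
  have hdet : Ac.det ≠ 0 := by
    have h1 : Ac.det = ((4 - r * s : ℤ) : ℂ) := by
      simp [hAc, hA, Matrix.det_fin_two, Matrix.map_apply]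
      push_cast; ring
    rw [h1, Int.cast_ne_zero]
    omega
  have hu : IsUnit Ac.det := isUnit_iff_ne_zero.mpr hdet
  have hBA : Ac⁻¹ * Ac = 1 := Matrix.nonsing_inv_mul Ac hu
  have hAB : Ac * Ac⁻¹ = 1 := Matrix.mul_nonsing_inv Ac hu
  have hHb : ∀ j : Fin 2, Hb D j
      = Ac⁻¹ j 0 • ((D.coroot 0 : L)) + Ac⁻¹ j 1 • ((D.coroot 1 : L)) := by
    intro j; simp [Hb, Fin.sum_univ_two, hAc]
  have hbracket_e : ∀ j i : Fin 2, ⁅Hb D j, D.e i⁆ = (if j = i then (1:ℂ) else 0) • D.e i := by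
    intro j i
    have hc : ∀ k, ⁅((D.coroot k : L)), D.e i⁆ = (Ac k i) • D.e i := by
      intro k
      rw [D.lie_h_e (D.coroot k) i, D.pairing k i]
      simp [hAc, Matrix.map_apply]
    rw [hHb j, add_lie, smul_lie, smul_lie, hc 0, hc 1, smul_smul, smul_smul, ← add_smul]
    have hmul : Ac⁻¹ j 0 * Ac 0 i + Ac⁻¹ j 1 * Ac 1 i = (Ac⁻¹ * Ac) j i := by
      rw [Matrix.mul_apply, Fin.sum_univ_two]
    rw [hmul, hBA, Matrix.one_apply]
  have hbracket_f : ∀ j i : Fin 2, ⁅Hb D j, D.f i⁆ = (-(if j = i then (1:ℂ) else 0)) • D.f i := by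
    intro j i
    have hc : ∀ k, ⁅((D.coroot k : L)), D.f i⁆ = (-(Ac k i)) • D.f i := by
      intro k
      rw [D.lie_h_f (D.coroot k) i, D.pairing k i]
      simp [hAc, Matrix.map_apply]
    rw [hHb j, add_lie, smul_lie, smul_lie, hc 0, hc 1, smul_smul, smul_smul, ← add_smul]
    have hmul : Ac⁻¹ j 0 * -Ac 0 i + Ac⁻¹ j 1 * -Ac 1 i = -((Ac⁻¹ * Ac) j i) := by
      rw [Matrix.mul_apply, Fin.sum_univ_two]; ring
    rw [hmul, hBA, Matrix.one_apply]
  intro i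
  have hEcomm : ∀ (j : Fin 2) (p : MvPolynomial (Fin 2) ℂ),
      ρ (D.e i) (X j * p) = (X j - if j = i then C (1:ℂ) else 0) * ρ (D.e i) p := by
    intro j p
    have h1 : ρ ⁅Hb D j, D.e i⁆ = ⁅mulX j, ρ (D.e i)⁆ := by rw [ρ.map_lie, hH j]
    rw [hbracket_e j i, map_smul ρ] at h1
    have h2 := congrArg (fun T : Module.End ℂ (MvPolynomial (Fin 2) ℂ) => T p) h1
    simp only [LinearMap.smul_apply, Ring.lie_def, LinearMap.sub_apply, Module.End.mul_apply,
      mulX, LinearMap.mulLeft_apply] at h2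
    by_cases hji : j = i
    · rw [if_pos hji] at h2 ⊢
      simp only [one_smul, C_1] at h2 ⊢
      linear_combination h2
    · rw [if_neg hji] at h2 ⊢
      simp only [zero_smul] at h2
      linear_combination h2
  have hFcomm : ∀ (j : Fin 2) (p : MvPolynomial (Fin 2) ℂ),
      ρ (D.f i) (X j * p) = (X j - if j = i then C (-1:ℂ) else 0) * ρ (D.f i) p := by
    intro j p
    have h1 : ρ ⁅Hb D j, D.f i⁆ = ⁅mulX j, ρ (D.f i)⁆ := by rw [ρ.map_lie, hH j]
    rw [hbracket_f j i, map_smul ρ] at h1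
    have h2 := congrArg (fun T : Module.End ℂ (MvPolynomial (Fin 2) ℂ) => T p) h1
    simp only [LinearMap.smul_apply, Ring.lie_def, LinearMap.sub_apply, Module.End.mul_apply,
      mulX, LinearMap.mulLeft_apply] at h2
    by_cases hji : j = i
    · rw [if_pos hji] at h2 ⊢
      simp only [neg_smul, one_smul, map_neg, C_1] at h2 ⊢
      linear_combination h2
    · rw [if_neg hji] at h2 ⊢
      simp only [neg_zero, zero_smul] at h2
      linear_combination h2
  have hE : ∀ p, ρ (D.e i) p = ρ (D.e i) 1 * shiftOp i 1 p := twist_formula i 1 _ hEcomm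
  have hF : ∀ p, ρ (D.f i) p = ρ (D.f i) 1 * shiftOp i (-1) p := twist_formula i (-1) _ hFcomm
  -- the action of the coroot H_i^∨
  have hcoroot : (D.coroot i : L) = ∑ j, (Ac i j) • Hb D j := by
    have e0 : (Ac * Ac⁻¹) i 0 = (if i = 0 then (1:ℂ) else 0) := by
      rw [hAB, Matrix.one_apply]
    have e1 : (Ac * Ac⁻¹) i 1 = (if i = 1 then (1:ℂ) else 0) := by
      rw [hAB, Matrix.one_apply]
    rw [Matrix.mul_apply, Fin.sum_univ_two] at e0 e1
    have key : ∀ i0 : Fin 2, (if i0 = 0 then (1:ℂ) else 0) • ((D.coroot 0 : L))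
        + (if i0 = 1 then (1:ℂ) else 0) • ((D.coroot 1 : L)) = (D.coroot i0 : L) := by
      intro i0; fin_cases i0 <;> simp
    rw [Fin.sum_univ_two, hHb 0, hHb 1, ← key i, ← e0, ← e1]
    match_scalars <;> ring
  have hρcor1 : ρ ((D.coroot i : L)) 1 = Ac i 0 • X 0 + Ac i 1 • X 1 := by
    rw [hcoroot, Fin.sum_univ_two, map_add ρ, map_smul ρ, map_smul ρ, hH 0, hH 1]
    simp [mulX, LinearMap.mulLeft_apply]
  have hne : ρ ((D.coroot i : L)) 1 ≠ 0 := by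
    rw [hρcor1]
    intro h0
    have h1 := congrArg (eval (fun k : Fin 2 => if k = i then (1:ℂ) else 0)) h0
    rw [map_add, smul_eval, smul_eval, eval_X, eval_X, map_zero] at h1
    have h2 : Ac i i = 2 := by
      rw [hAc, Matrix.map_apply, g.diag i]; norm_num
    have hi : i = 0 ∨ i = 1 := by omega
    rcases hi with rfl | rfl <;> norm_num at h1 <;>
      rw [h1] at h2 <;> norm_num at h2
  have hef : ρ ((D.coroot i : L)) = ⁅ρ (D.e i), ρ (D.f i)⁆ := by
    rw [← ρ.map_lie, D.lie_e_f i i, if_pos rfl]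
  have hE1 : ρ (D.e i) 1 ≠ 0 := by
    intro h0
    apply hne
    have h1 := congrArg (fun T : Module.End ℂ (MvPolynomial (Fin 2) ℂ) => T 1) hef
    simp only [Ring.lie_def, LinearMap.sub_apply, Module.End.mul_apply] at h1
    rw [h1, hE (ρ (D.f i) 1), h0, zero_mul]
    simp
  have hF1 : ρ (D.f i) 1 ≠ 0 := by
    intro h0
    apply hne
    have h1 := congrArg (fun T : Module.End ℂ (MvPolynomial (Fin 2) ℂ) => T 1) hef
    simp only [Ring.lie_def, LinearMap.sub_apply, Module.End.mul_apply] at h1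
    rw [h1, hF (ρ (D.e i) 1), h0, zero_mul]
    simp
  exact ⟨hE1, hF1, fun p => ⟨hE p, hF p⟩⟩

end KM
end

section
/- Let g be a Kac-Moody algebra with Cartan subalgebra h, let Z be an abelian complex Lie algebra, g̃ = Z ⊕ g with [Z,g̃] = 0, and h̃ = Z ⊕ h. Then H(g) = ∅ if and only if H(g̃) = ∅; that is, there exists a g-module free of rank 1 over U(h) if and only if there exists a g̃-module free of rank 1 over U(h̃). -/
open scoped BigOperators
open MvPolynomial

namespace KM

attribute [local instance 100] LieRing.ofAssociativeRing

section Lemma14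

open scoped TensorProduct
open UniversalEnvelopingAlgebra



theorem uea_induction {R Lc : Type} [CommRing R] [LieRing Lc] [LieAlgebra R Lc]
    {C : UniversalEnvelopingAlgebra R Lc → Prop}
    (halg : ∀ r : R, C (algebraMap R (UniversalEnvelopingAlgebra R Lc) r))
    (hι : ∀ x : Lc, C (ι R x))
    (hmul : ∀ a b, C a → C b → C (a * b)) (hadd : ∀ a b, C a → C b → C (a + b)) :
    ∀ a, C a := by
  intro a
  obtain ⟨t, rfl⟩ : ∃ t, mkAlgHom R Lc t = a := Quot.exists_rep a
  change C (mkAlgHom R Lc t)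
  induction t using TensorAlgebra.induction with
  | algebraMap r => rw [AlgHom.commutes]; exact halg r
  | ι x => exact hι x
  | mul a b ha hb => rw [map_mul]; exact hmul _ _ ha hb
  | add a b ha hb => rw [map_add]; exact hadd _ _ ha hb

theorem uea_ι_comm {R Lc : Type} [CommRing R] [LieRing Lc] [LieAlgebra R Lc]
    (hab : ∀ x y : Lc, ⁅x, y⁆ = 0) (x y : Lc) :
    ι R x * ι R y = ι R y * ι R x := by
  have h : ⁅ι R x, ι R y⁆ = (0 : UniversalEnvelopingAlgebra R Lc) := by
    rw [← LieHom.map_lie, hab, map_zero]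
  rw [LieRing.of_associative_ring_bracket] at h
  exact sub_eq_zero.mp h

theorem uea_comm {R Lc : Type} [CommRing R] [LieRing Lc] [LieAlgebra R Lc]
    (hab : ∀ x y : Lc, ⁅x, y⁆ = 0) (a b : UniversalEnvelopingAlgebra R Lc) :
    a * b = b * a := by
  induction a using uea_induction with
  | halg r => rw [Algebra.commutes]
  | hι x =>
    induction b using uea_induction with
    | halg r => rw [Algebra.commutes]
    | hι y => exact uea_ι_comm hab x y
    | hmul a b ha hb => rw [← mul_assoc, ha, mul_assoc, hb, mul_assoc]
    | hadd a b ha hb => rw [mul_add, add_mul, ha, hb]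
  | hmul a b ha hb => rw [mul_assoc, hb, ← mul_assoc, ha, mul_assoc]
  | hadd a b ha hb => rw [add_mul, mul_add, ha, hb]


section Generic
variable {L' : Type} [LieRing L'] [LieAlgebra ℂ L'] (K : LieSubalgebra ℂ L')
variable (M : Type) [AddCommGroup M] [Module ℂ M] [LieRingModule L' M] [LieModule ℂ L' M] (v : M)

theorem genMap_ι_mul (x : K) (u : UniversalEnvelopingAlgebra ℂ K) :
    (UniversalEnvelopingAlgebra.lift ℂ ((LieModule.toEnd ℂ L' M).comp K.incl) (ι ℂ x * u)) v
      = ⁅(x : L'), (UniversalEnvelopingAlgebra.lift ℂ ((LieModule.toEnd ℂ L' M).comp K.incl) u) v⁆ := by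
  rw [map_mul, lift_ι_apply]
  simp [LieModule.toEnd_apply_apply]

theorem genMap_one :
    (UniversalEnvelopingAlgebra.lift ℂ ((LieModule.toEnd ℂ L' M).comp K.incl) 1) v = v := by
  rw [map_one]; rfl

noncomputable def betaLin : UniversalEnvelopingAlgebra ℂ K →ₗ[ℂ] M where
  toFun u := (UniversalEnvelopingAlgebra.lift ℂ ((LieModule.toEnd ℂ L' M).comp K.incl) u) v
  map_add' a b := by rw [map_add]; rfl
  map_smul' c a := by rw [map_smul]; rfl

theorem betaLin_ι_mul (x : K) (u : UniversalEnvelopingAlgebra ℂ K) :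
    betaLin K M v (ι ℂ x * u) = ⁅(x : L'), betaLin K M v u⁆ :=
  genMap_ι_mul K M v x u

theorem betaLin_one : betaLin K M v 1 = v := genMap_one K M v

end Generic

/-- Conjugation of a representation by a linear equivalence. -/
noncomputable def conjLieHom {L' M M' : Type} [LieRing L'] [LieAlgebra ℂ L']
    [AddCommGroup M] [Module ℂ M] [AddCommGroup M'] [Module ℂ M']
    (e : M ≃ₗ[ℂ] M') (ρ : L' →ₗ⁅ℂ⁆ Module.End ℂ M') : L' →ₗ⁅ℂ⁆ Module.End ℂ M where
  toFun y := e.symm.toLinearMap ∘ₗ ρ y ∘ₗ e.toLinearMap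
  map_add' a b := by ext m; simp
  map_smul' c a := by ext m; simp
  map_lie' {a b} := by
    ext m
    simp only [LieHom.map_lie, LieRing.of_associative_ring_bracket]
    simp [Module.End.mul_apply, LinearMap.sub_apply, map_sub]

theorem conjLieHom_apply {L' M M' : Type} [LieRing L'] [LieAlgebra ℂ L']
    [AddCommGroup M] [Module ℂ M] [AddCommGroup M'] [Module ℂ M']
    (e : M ≃ₗ[ℂ] M') (ρ : L' →ₗ⁅ℂ⁆ Module.End ℂ M') (y : L') (m : M) :
    conjLieHom e ρ y m = e.symm (ρ y (e m)) := rfl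



section Main
variable {Z L Lt : Type} [LieRing Z] [LieAlgebra ℂ Z] [LieRing L] [LieAlgebra ℂ L]
  [LieRing Lt] [LieAlgebra ℂ Lt]
variable (H : LieSubalgebra ℂ L) (jZ : Z →ₗ⁅ℂ⁆ Lt) (jL : L →ₗ⁅ℂ⁆ Lt)

/-- The decomposition `Lt ≃ Z × L`. -/
noncomputable def decEquiv (hdirect : Function.Bijective fun p : Z × L => jZ p.1 + jL p.2) :
    (Z × L) ≃ₗ[ℂ] Lt :=
  LinearEquiv.ofBijective
    (jZ.toLinearMap ∘ₗ LinearMap.fst ℂ Z L + jL.toLinearMap ∘ₗ LinearMap.snd ℂ Z L) hdirect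

variable (hdirect : Function.Bijective fun p : Z × L => jZ p.1 + jL p.2)

noncomputable def piZ : Lt →ₗ[ℂ] Z :=
  LinearMap.fst ℂ Z L ∘ₗ (decEquiv jZ jL hdirect).symm.toLinearMap

noncomputable def piL : Lt →ₗ[ℂ] L :=
  LinearMap.snd ℂ Z L ∘ₗ (decEquiv jZ jL hdirect).symm.toLinearMap

theorem decEquiv_apply (p : Z × L) : decEquiv jZ jL hdirect p = jZ p.1 + jL p.2 := rfl

theorem piZ_piL_eq (x : Lt) : jZ (piZ jZ jL hdirect x) + jL (piL jZ jL hdirect x) = x := by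
  conv_rhs => rw [← (decEquiv jZ jL hdirect).apply_symm_apply x]
  rfl

theorem pi_apply (z : Z) (y : L) :
    piZ jZ jL hdirect (jZ z + jL y) = z ∧ piL jZ jL hdirect (jZ z + jL y) = y := by
  have h : (decEquiv jZ jL hdirect).symm (decEquiv jZ jL hdirect (z, y)) = (z, y) :=
    (decEquiv jZ jL hdirect).symm_apply_apply _
  rw [decEquiv_apply] at h
  constructor
  · show ((decEquiv jZ jL hdirect).symm _).1 = z; rw [h]
  · show ((decEquiv jZ jL hdirect).symm _).2 = y; rw [h]

theorem piZ_jZ (z : Z) : piZ jZ jL hdirect (jZ z) = z := by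
  have := (pi_apply jZ jL hdirect z 0).1; simpa using this

theorem piL_jZ (z : Z) : piL jZ jL hdirect (jZ z) = 0 := by
  have := (pi_apply jZ jL hdirect z 0).2; simpa using this

theorem piZ_jL (y : L) : piZ jZ jL hdirect (jL y) = 0 := by
  have := (pi_apply jZ jL hdirect 0 y).1; simpa using this

theorem piL_jL (y : L) : piL jZ jL hdirect (jL y) = y := by
  have := (pi_apply jZ jL hdirect 0 y).2; simpa using this

variable (hcomm : ∀ (z : Z) (x : Lt), ⁅jZ z, x⁆ = 0)
variable (habS : ∀ x y : H, ⁅x, y⁆ = 0) (hZ : ∀ z w : Z, ⁅z, w⁆ = 0)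

include hcomm in

theorem lie_decomp (z z' : Z) (y y' : L) :
    ⁅jZ z + jL y, jZ z' + jL y'⁆ = jL ⁅y, y'⁆ := by
  have h1 : ⁅jL y, jZ z'⁆ = 0 := by rw [← lie_skew, hcomm, neg_zero]
  rw [add_lie, lie_add, lie_add, hcomm, hcomm, h1, ← LieHom.map_lie]
  abel

include hcomm in
theorem lie_eq (x x' : Lt) :
    ⁅x, x'⁆ = jL ⁅piL jZ jL hdirect x, piL jZ jL hdirect x'⁆ := by
  conv_lhs => rw [← piZ_piL_eq jZ jL hdirect x, ← piZ_piL_eq jZ jL hdirect x']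
  exact lie_decomp jZ jL hcomm _ _ _ _

include hcomm in
theorem piZ_lie (x x' : Lt) : piZ jZ jL hdirect ⁅x, x'⁆ = 0 := by
  rw [lie_eq jZ jL hdirect hcomm, piZ_jL]

include hcomm in
theorem piL_lie (x x' : Lt) :
    piL jZ jL hdirect ⁅x, x'⁆ = ⁅piL jZ jL hdirect x, piL jZ jL hdirect x'⁆ := by
  rw [lie_eq jZ jL hdirect hcomm, piL_jL]

/-- The extended Cartan subalgebra `h̃`. -/
noncomputable def cartExt : LieSubalgebra ℂ Lt :=
  LieSubalgebra.lieSpan ℂ Lt (Set.range ⇑jZ ∪ ⇑jL '' (H : Set L))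

include hcomm in
theorem mem_cartExt (x : Lt) :
    x ∈ cartExt H jZ jL ↔ ∃ z y, y ∈ H ∧ x = jZ z + jL y := by
  constructor
  · intro hx
    let S : LieSubalgebra ℂ Lt :=
      { carrier := {x | ∃ z y, y ∈ H ∧ x = jZ z + jL y}
        add_mem' := by
          rintro a b ⟨z, y, hy, rfl⟩ ⟨z', y', hy', rfl⟩
          exact ⟨z + z', y + y', H.add_mem hy hy', by rw [map_add, map_add]; abel⟩
        zero_mem' := ⟨0, 0, H.zero_mem, by simp⟩
        smul_mem' := by
          rintro c a ⟨z, y, hy, rfl⟩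
          exact ⟨c • z, c • y, H.smul_mem c hy, by rw [map_smul, map_smul, smul_add]⟩
        lie_mem' := by
          rintro a b ⟨z, y, hy, rfl⟩ ⟨z', y', hy', rfl⟩
          exact ⟨0, ⁅y, y'⁆, H.lie_mem hy hy', by
            rw [lie_decomp jZ jL hcomm, map_zero, zero_add]⟩ }
    have hle : cartExt H jZ jL ≤ S := by
      rw [cartExt, LieSubalgebra.lieSpan_le]
      rintro a (⟨z, rfl⟩ | ⟨y, hy, rfl⟩)
      · exact ⟨z, 0, H.zero_mem, by simp⟩
      · exact ⟨0, y, hy, by simp⟩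
    exact hle hx
  · rintro ⟨z, y, hy, rfl⟩
    exact (cartExt H jZ jL).add_mem
      (LieSubalgebra.subset_lieSpan (Set.mem_union_left _ ⟨z, rfl⟩))
      (LieSubalgebra.subset_lieSpan (Set.mem_union_right _ ⟨y, hy, rfl⟩))

include habS in
theorem habL : ∀ a b : L, a ∈ H → b ∈ H → ⁅a, b⁆ = 0 := by
  intro a b ha hb
  have h2 : ((⁅(⟨a, ha⟩ : H), (⟨b, hb⟩ : H)⁆ : H) : L) = ⁅a, b⁆ := rfl
  rw [habS ⟨a, ha⟩ ⟨b, hb⟩] at h2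
  simpa using h2.symm

include hcomm habS in
theorem cartExt_abelian : ∀ x y : cartExt H jZ jL, ⁅x, y⁆ = 0 := by
  intro x y
  have hx := (mem_cartExt H jZ jL hcomm _).mp x.2
  have hy := (mem_cartExt H jZ jL hcomm _).mp y.2
  obtain ⟨z, a, ha, hxe⟩ := hx
  obtain ⟨z', b, hb, hye⟩ := hy
  apply Subtype.ext
  show ⁅(x : Lt), (y : Lt)⁆ = 0
  rw [hxe, hye, lie_decomp jZ jL hcomm, habL H habS a b ha hb, map_zero]

/-- `U(Z) ⊗ U(h)`. -/
abbrev NN : Type :=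
  (UniversalEnvelopingAlgebra ℂ Z) ⊗[ℂ] (UniversalEnvelopingAlgebra ℂ H)

include hcomm in
theorem piL_mem {x : Lt} (hx : x ∈ cartExt H jZ jL) : piL jZ jL hdirect x ∈ H := by
  obtain ⟨z, y, hy, rfl⟩ := (mem_cartExt H jZ jL hcomm x).mp hx
  rw [(pi_apply jZ jL hdirect z y).2]
  exact hy

noncomputable def piH : (cartExt H jZ jL) →ₗ[ℂ] H :=
  LinearMap.codRestrict H.toSubmodule
    ((piL jZ jL hdirect) ∘ₗ (cartExt H jZ jL).toSubmodule.subtype)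
    (fun x => piL_mem H jZ jL hdirect hcomm x.2)

theorem piH_coe (x : cartExt H jZ jL) :
    ((piH H jZ jL hdirect hcomm x : H) : L) = piL jZ jL hdirect (x : Lt) := rfl

noncomputable def phiLin : (cartExt H jZ jL) →ₗ[ℂ] NN (Z := Z) H :=
  ((TensorProduct.mk ℂ (UniversalEnvelopingAlgebra ℂ Z) (UniversalEnvelopingAlgebra ℂ H)).flip 1)
      ∘ₗ (ι ℂ).toLinearMap ∘ₗ (piZ jZ jL hdirect) ∘ₗ (cartExt H jZ jL).toSubmodule.subtype
    + (TensorProduct.mk ℂ (UniversalEnvelopingAlgebra ℂ Z) (UniversalEnvelopingAlgebra ℂ H) 1)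
      ∘ₗ (ι ℂ).toLinearMap ∘ₗ (piH H jZ jL hdirect hcomm)

theorem phiLin_apply (x : cartExt H jZ jL) :
    phiLin H jZ jL hdirect hcomm x
      = (ι ℂ (piZ jZ jL hdirect (x : Lt))) ⊗ₜ[ℂ] 1
        + 1 ⊗ₜ[ℂ] (ι ℂ (piH H jZ jL hdirect hcomm x)) := rfl

include hcomm habS hZ in
theorem phiLin_mul_comm (x y : cartExt H jZ jL) :
    phiLin H jZ jL hdirect hcomm x * phiLin H jZ jL hdirect hcomm y
      = phiLin H jZ jL hdirect hcomm y * phiLin H jZ jL hdirect hcomm x := by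
  rw [phiLin_apply, phiLin_apply]
  set a := ι ℂ (piZ jZ jL hdirect (x : Lt))
  set b := ι ℂ (piH H jZ jL hdirect hcomm x)
  set a' := ι ℂ (piZ jZ jL hdirect (y : Lt))
  set b' := ι ℂ (piH H jZ jL hdirect hcomm y)
  have haa : a * a' = a' * a := uea_ι_comm hZ _ _
  have hbb : b * b' = b' * b := uea_ι_comm habS _ _
  simp only [add_mul, mul_add, Algebra.TensorProduct.tmul_mul_tmul, one_mul, mul_one,
    haa, hbb]
  abel

noncomputable def phi : (cartExt H jZ jL) →ₗ⁅ℂ⁆ NN (Z := Z) H :=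
  { phiLin H jZ jL hdirect hcomm with
    map_lie' := by
      intro x y
      rw [cartExt_abelian H jZ jL hcomm habS x y]
      change phiLin H jZ jL hdirect hcomm 0
        = ⁅phiLin H jZ jL hdirect hcomm x, phiLin H jZ jL hdirect hcomm y⁆
      rw [LieRing.of_associative_ring_bracket,
        phiLin_mul_comm H jZ jL hdirect hcomm habS hZ x y, sub_self,
        (phiLin H jZ jL hdirect hcomm).map_zero] }

theorem phi_apply (x : cartExt H jZ jL) :
    phi H jZ jL hdirect hcomm habS hZ x
      = (ι ℂ (piZ jZ jL hdirect (x : Lt))) ⊗ₜ[ℂ] 1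
        + 1 ⊗ₜ[ℂ] (ι ℂ (piH H jZ jL hdirect hcomm x)) := rfl

/-- The algebra map `U(h̃) → U(Z) ⊗ U(h)`. -/
noncomputable def Phi : UniversalEnvelopingAlgebra ℂ (cartExt H jZ jL) →ₐ[ℂ] NN (Z := Z) H :=
  UniversalEnvelopingAlgebra.lift ℂ (phi H jZ jL hdirect hcomm habS hZ)

noncomputable def gZmap : Z →ₗ⁅ℂ⁆ (cartExt H jZ jL) where
  toFun z := ⟨jZ z, LieSubalgebra.subset_lieSpan (Set.mem_union_left _ ⟨z, rfl⟩)⟩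
  map_add' a b := by apply Subtype.ext; exact jZ.map_add a b
  map_smul' c a := by apply Subtype.ext; exact jZ.map_smul c a
  map_lie' {a b} := by apply Subtype.ext; rw [LieSubalgebra.coe_bracket]; exact jZ.map_lie a b

noncomputable def gHmap : H →ₗ⁅ℂ⁆ (cartExt H jZ jL) where
  toFun h := ⟨jL (h : L),
    LieSubalgebra.subset_lieSpan (Set.mem_union_right _ ⟨(h : L), h.2, rfl⟩)⟩
  map_add' a b := by apply Subtype.ext; exact jL.map_add a b
  map_smul' c a := by apply Subtype.ext; exact jL.map_smul c a
  map_lie' {a b} := by apply Subtype.ext; exact jL.map_lie a b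

noncomputable def PsiZ : (UniversalEnvelopingAlgebra ℂ Z)
    →ₐ[ℂ] UniversalEnvelopingAlgebra ℂ (cartExt H jZ jL) :=
  UniversalEnvelopingAlgebra.lift ℂ ((ι ℂ).comp (gZmap H jZ jL))

noncomputable def PsiH : (UniversalEnvelopingAlgebra ℂ H)
    →ₐ[ℂ] UniversalEnvelopingAlgebra ℂ (cartExt H jZ jL) :=
  UniversalEnvelopingAlgebra.lift ℂ ((ι ℂ).comp (gHmap H jZ jL))

noncomputable def Psi : NN (Z := Z) H
    →ₐ[ℂ] UniversalEnvelopingAlgebra ℂ (cartExt H jZ jL) :=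
  Algebra.TensorProduct.lift (PsiZ H jZ jL) (PsiH H jZ jL)
    (fun a b => @id (Commute _ _) (uea_comm (cartExt_abelian H jZ jL hcomm habS) _ _))

theorem phi_gZ (z : Z) :
    phi H jZ jL hdirect hcomm habS hZ (gZmap H jZ jL z) = (ι ℂ z) ⊗ₜ[ℂ] 1 := by
  rw [phi_apply]
  have h1 : piZ jZ jL hdirect ((gZmap H jZ jL z : Lt)) = z := piZ_jZ jZ jL hdirect z
  have h2 : piH H jZ jL hdirect hcomm (gZmap H jZ jL z) = 0 := by
    apply Subtype.ext
    rw [piH_coe]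
    exact piL_jZ jZ jL hdirect z
  rw [h1, h2]
  simp

theorem phi_gH (h : H) :
    phi H jZ jL hdirect hcomm habS hZ (gHmap H jZ jL h) = 1 ⊗ₜ[ℂ] (ι ℂ h) := by
  rw [phi_apply]
  have h1 : piZ jZ jL hdirect ((gHmap H jZ jL h : Lt)) = 0 := piZ_jL jZ jL hdirect _
  have h2 : piH H jZ jL hdirect hcomm (gHmap H jZ jL h) = h := by
    apply Subtype.ext
    rw [piH_coe]
    exact piL_jL jZ jL hdirect _
  rw [h1, h2]
  simp

theorem Psi_Phi_apply (u : UniversalEnvelopingAlgebra ℂ (cartExt H jZ jL)) :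
    Psi H jZ jL hcomm habS (Phi H jZ jL hdirect hcomm habS hZ u) = u := by
  have key : (Psi H jZ jL hcomm habS).comp (Phi H jZ jL hdirect hcomm habS hZ)
      = AlgHom.id ℂ _ := by
    apply UniversalEnvelopingAlgebra.hom_ext
    apply LieHom.ext
    intro x
    show Psi H jZ jL hcomm habS (Phi H jZ jL hdirect hcomm habS hZ (ι ℂ x)) = ι ℂ x
    rw [Phi, lift_ι_apply, phi_apply, map_add, Psi, Algebra.TensorProduct.lift_tmul,
      Algebra.TensorProduct.lift_tmul, map_one, map_one, mul_one, one_mul,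
      PsiZ, PsiH, lift_ι_apply, lift_ι_apply, LieHom.comp_apply, LieHom.comp_apply]
    show ι ℂ (gZmap H jZ jL _) + ι ℂ (gHmap H jZ jL _) = _
    rw [← map_add (ι ℂ)]
    congr 1
    apply Subtype.ext
    show jZ (piZ jZ jL hdirect (x : Lt)) + jL ((piH H jZ jL hdirect hcomm x : H) : L)
      = (x : Lt)
    rw [piH_coe]
    exact piZ_piL_eq jZ jL hdirect (x : Lt)
  exact AlgHom.congr_fun key u

theorem Phi_Psi_apply (u : NN (Z := Z) H) :
    Phi H jZ jL hdirect hcomm habS hZ (Psi H jZ jL hcomm habS u) = u := by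
  have key : (Phi H jZ jL hdirect hcomm habS hZ).comp (Psi H jZ jL hcomm habS)
      = AlgHom.id ℂ _ := by
    apply Algebra.TensorProduct.ext
    · apply UniversalEnvelopingAlgebra.hom_ext
      apply LieHom.ext
      intro z
      show Phi H jZ jL hdirect hcomm habS hZ
          (Psi H jZ jL hcomm habS ((ι ℂ z) ⊗ₜ[ℂ] 1)) = (ι ℂ z) ⊗ₜ[ℂ] 1
      rw [Psi, Algebra.TensorProduct.lift_tmul, map_one, mul_one, PsiZ, lift_ι_apply,
        LieHom.comp_apply, Phi, lift_ι_apply]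
      exact phi_gZ H jZ jL hdirect hcomm habS hZ z
    · apply UniversalEnvelopingAlgebra.hom_ext
      apply LieHom.ext
      intro h
      show Phi H jZ jL hdirect hcomm habS hZ
          (Psi H jZ jL hcomm habS (1 ⊗ₜ[ℂ] (ι ℂ h))) = 1 ⊗ₜ[ℂ] (ι ℂ h)
      rw [Psi, Algebra.TensorProduct.lift_tmul, map_one, one_mul, PsiH, lift_ι_apply,
        LieHom.comp_apply, Phi, lift_ι_apply]
      exact phi_gH H jZ jL hdirect hcomm habS hZ h
  exact AlgHom.congr_fun key u

theorem Phi_bijective : Function.Bijective (Phi H jZ jL hdirect hcomm habS hZ) :=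
  Function.bijective_iff_has_inverse.mpr
    ⟨Psi H jZ jL hcomm habS, Psi_Phi_apply H jZ jL hdirect hcomm habS hZ,
      Phi_Psi_apply H jZ jL hdirect hcomm habS hZ⟩

end Main

section OpLemmas
variable {Z L : Type} [LieRing Z] [LieAlgebra ℂ Z] [LieRing L] [LieAlgebra ℂ L]
variable (H : LieSubalgebra ℂ L)

theorem lTensor_mulLeft (b : UniversalEnvelopingAlgebra ℂ H) :
    LinearMap.lTensor (UniversalEnvelopingAlgebra ℂ Z) (LinearMap.mulLeft ℂ b)
      = LinearMap.mulLeft ℂ ((1 : UniversalEnvelopingAlgebra ℂ Z) ⊗ₜ[ℂ] b) := by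
  apply TensorProduct.ext'
  intro c d
  simp [Algebra.TensorProduct.tmul_mul_tmul]

theorem lTensor_comm_mulLeft (a : UniversalEnvelopingAlgebra ℂ Z)
    (f : Module.End ℂ (UniversalEnvelopingAlgebra ℂ H)) :
    (LinearMap.lTensor (UniversalEnvelopingAlgebra ℂ Z) f)
        ∘ₗ LinearMap.mulLeft ℂ (a ⊗ₜ[ℂ] (1 : UniversalEnvelopingAlgebra ℂ H))
      = LinearMap.mulLeft ℂ (a ⊗ₜ[ℂ] 1)
        ∘ₗ LinearMap.lTensor (UniversalEnvelopingAlgebra ℂ Z) f := by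
  apply TensorProduct.ext'
  intro c d
  simp [Algebra.TensorProduct.tmul_mul_tmul]

end OpLemmas

section Forward
variable {Z L Lt : Type} [LieRing Z] [LieAlgebra ℂ Z] [LieRing L] [LieAlgebra ℂ L]
  [LieRing Lt] [LieAlgebra ℂ Lt]
variable (H : LieSubalgebra ℂ L) (jZ : Z →ₗ⁅ℂ⁆ Lt) (jL : L →ₗ⁅ℂ⁆ Lt)
variable (hdirect : Function.Bijective fun p : Z × L => jZ p.1 + jL p.2)
variable (hcomm : ∀ (z : Z) (x : Lt), ⁅jZ z, x⁆ = 0)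
variable (habS : ∀ x y : H, ⁅x, y⁆ = 0) (hZ : ∀ z w : Z, ⁅z, w⁆ = 0)
variable (M : Type) [AddCommGroup M] [Module ℂ M] [LieRingModule L M] [LieModule ℂ L M]
variable (v : M) (hbij : Function.Bijective ⇑(betaLin H M v))

theorem mulLeft_add' (A B : NN (Z := Z) H) :
    LinearMap.mulLeft ℂ (A + B) = LinearMap.mulLeft ℂ A + LinearMap.mulLeft ℂ B := by
  apply LinearMap.ext; intro m
  simp [add_mul]

theorem mulLeft_smul' (c : ℂ) (A : NN (Z := Z) H) :
    LinearMap.mulLeft ℂ (c • A) = c • LinearMap.mulLeft ℂ A := by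
  apply LinearMap.ext; intro m
  simp [smul_mul_assoc]

noncomputable def betaEquiv : UniversalEnvelopingAlgebra ℂ H ≃ₗ[ℂ] M :=
  LinearEquiv.ofBijective (betaLin H M v) hbij

noncomputable def rhoP : L →ₗ⁅ℂ⁆ Module.End ℂ (UniversalEnvelopingAlgebra ℂ H) :=
  conjLieHom (betaEquiv H M v hbij) (LieModule.toEnd ℂ L M)

theorem rhoP_H (h : H) :
    rhoP H M v hbij (h : L) = LinearMap.mulLeft ℂ (ι ℂ h) := by
  apply LinearMap.ext; intro u
  have h1 : (LieModule.toEnd ℂ L M) (h : L) ((betaEquiv H M v hbij) u)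
      = betaEquiv H M v hbij (ι ℂ h * u) := by
    rw [LieModule.toEnd_apply_apply]
    exact (betaLin_ι_mul H M v h u).symm
  show (betaEquiv H M v hbij).symm
      ((LieModule.toEnd ℂ L M) (h : L) ((betaEquiv H M v hbij) u)) = ι ℂ h * u
  rw [h1, LinearEquiv.symm_apply_apply]

noncomputable def opF (x : Lt) : Module.End ℂ (NN (Z := Z) H) :=
  LinearMap.mulLeft ℂ ((ι ℂ (piZ jZ jL hdirect x)) ⊗ₜ[ℂ] 1)
    + LinearMap.lTensor (UniversalEnvelopingAlgebra ℂ Z)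
        (rhoP H M v hbij (piL jZ jL hdirect x))

theorem opF_add (x y : Lt) : opF H jZ jL hdirect M v hbij (x + y)
    = opF H jZ jL hdirect M v hbij x + opF H jZ jL hdirect M v hbij y := by
  rw [opF, opF, opF, (piZ jZ jL hdirect).map_add, (piL jZ jL hdirect).map_add, map_add (ι ℂ),
    TensorProduct.add_tmul, map_add (rhoP H M v hbij), LinearMap.lTensor_add,
    mulLeft_add' H]
  abel

theorem opF_smul (c : ℂ) (x : Lt) : opF H jZ jL hdirect M v hbij (c • x)
    = c • opF H jZ jL hdirect M v hbij x := by
  rw [opF, opF, (piZ jZ jL hdirect).map_smul, (piL jZ jL hdirect).map_smul, map_smul (ι ℂ),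
    ← TensorProduct.smul_tmul', map_smul (rhoP H M v hbij), LinearMap.lTensor_smul,
    mulLeft_smul' H, smul_add]

include hcomm hZ in
set_option maxHeartbeats 1000000 in
theorem opF_lie (x y : Lt) : opF H jZ jL hdirect M v hbij ⁅x, y⁆
    = ⁅opF H jZ jL hdirect M v hbij x, opF H jZ jL hdirect M v hbij y⁆ := by
  rw [opF, opF, opF, piZ_lie jZ jL hdirect hcomm, map_zero (ι ℂ), TensorProduct.zero_tmul,
    LinearMap.mulLeft_zero_eq_zero, zero_add, piL_lie jZ jL hdirect hcomm,
    (rhoP H M v hbij).map_lie]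
  set A := LinearMap.mulLeft ℂ ((ι ℂ (piZ jZ jL hdirect x)) ⊗ₜ[ℂ]
    (1 : UniversalEnvelopingAlgebra ℂ H)) with hA
  set A' := LinearMap.mulLeft ℂ ((ι ℂ (piZ jZ jL hdirect y)) ⊗ₜ[ℂ]
    (1 : UniversalEnvelopingAlgebra ℂ H)) with hA'
  set F := LinearMap.lTensor (UniversalEnvelopingAlgebra ℂ Z)
    (rhoP H M v hbij (piL jZ jL hdirect x)) with hF
  set F' := LinearMap.lTensor (UniversalEnvelopingAlgebra ℂ Z)
    (rhoP H M v hbij (piL jZ jL hdirect y)) with hF'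
  have hAA : A * A' = A' * A := by
    rw [hA, hA', Module.End.mul_eq_comp, Module.End.mul_eq_comp, ← LinearMap.mulLeft_mul,
      ← LinearMap.mulLeft_mul, Algebra.TensorProduct.tmul_mul_tmul,
      Algebra.TensorProduct.tmul_mul_tmul, uea_ι_comm hZ]
  have hAF : A * F' = F' * A :=
    (lTensor_comm_mulLeft H (ι ℂ (piZ jZ jL hdirect x)) _).symm
  have hFA : F * A' = A' * F :=
    lTensor_comm_mulLeft H (ι ℂ (piZ jZ jL hdirect y)) _
  rw [LieRing.of_associative_ring_bracket, LieRing.of_associative_ring_bracket,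
    LinearMap.lTensor_sub]
  have hFF : LinearMap.lTensor (UniversalEnvelopingAlgebra ℂ Z)
      (rhoP H M v hbij (piL jZ jL hdirect x) * rhoP H M v hbij (piL jZ jL hdirect y))
      = F * F' := by
    rw [Module.End.mul_eq_comp, LinearMap.lTensor_comp, hF, hF', ← Module.End.mul_eq_comp]
  have hFF' : LinearMap.lTensor (UniversalEnvelopingAlgebra ℂ Z)
      (rhoP H M v hbij (piL jZ jL hdirect y) * rhoP H M v hbij (piL jZ jL hdirect x))
      = F' * F := by
    rw [Module.End.mul_eq_comp, LinearMap.lTensor_comp, hF, hF', ← Module.End.mul_eq_comp]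
  rw [hFF, hFF', add_mul, add_mul, mul_add, mul_add, mul_add, mul_add, hAA, hAF, hFA]
  abel

/-- The action of `g̃` on `U(Z) ⊗ U(h)`. -/
noncomputable def rhoT : Lt →ₗ⁅ℂ⁆ Module.End ℂ (NN (Z := Z) H) where
  toFun := opF H jZ jL hdirect M v hbij
  map_add' := opF_add H jZ jL hdirect M v hbij
  map_smul' := opF_smul H jZ jL hdirect M v hbij
  map_lie' {x y} := opF_lie H jZ jL hdirect hcomm hZ M v hbij x y

theorem rhoT_cart (x : cartExt H jZ jL) :
    rhoT H jZ jL hdirect hcomm hZ M v hbij (x : Lt)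
      = LinearMap.mulLeft ℂ (phi H jZ jL hdirect hcomm habS hZ x) := by
  show opF H jZ jL hdirect M v hbij (x : Lt) = _
  rw [opF]
  have h1 : piL jZ jL hdirect (x : Lt) = ((piH H jZ jL hdirect hcomm x : H) : L) :=
    (piH_coe H jZ jL hdirect hcomm x).symm
  rw [h1, rhoP_H H M v hbij, lTensor_mulLeft H, ← mulLeft_add' H, ← phi_apply]

end Forward

section Backward
variable {Z L Lt : Type} [LieRing Z] [LieAlgebra ℂ Z] [LieRing L] [LieAlgebra ℂ L]
  [LieRing Lt] [LieAlgebra ℂ Lt]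
variable (H : LieSubalgebra ℂ L) (jZ : Z →ₗ⁅ℂ⁆ Lt) (jL : L →ₗ⁅ℂ⁆ Lt)
variable (hdirect : Function.Bijective fun p : Z × L => jZ p.1 + jL p.2)
variable (hcomm : ∀ (z : Z) (x : Lt), ⁅jZ z, x⁆ = 0)
variable (habS : ∀ x y : H, ⁅x, y⁆ = 0) (hZ : ∀ z w : Z, ⁅z, w⁆ = 0)
variable (Mt : Type) [AddCommGroup Mt] [Module ℂ Mt] [LieRingModule Lt Mt]
  [LieModule ℂ Lt Mt]
variable (vt : Mt) (hbijt : Function.Bijective ⇑(betaLin (cartExt H jZ jL) Mt vt))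

noncomputable def PhiEquiv :
    UniversalEnvelopingAlgebra ℂ (cartExt H jZ jL) ≃ₗ[ℂ] NN (Z := Z) H :=
  LinearEquiv.ofBijective (Phi H jZ jL hdirect hcomm habS hZ).toLinearMap
    (Phi_bijective H jZ jL hdirect hcomm habS hZ)

noncomputable def thetaEq : NN (Z := Z) H ≃ₗ[ℂ] Mt :=
  (PhiEquiv H jZ jL hdirect hcomm habS hZ).symm.trans
    (betaEquiv (cartExt H jZ jL) Mt vt hbijt)

/-- The transported action of `g̃` on `U(Z) ⊗ U(h)`. -/
noncomputable def rhoN : Lt →ₗ⁅ℂ⁆ Module.End ℂ (NN (Z := Z) H) :=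
  conjLieHom (thetaEq H jZ jL hdirect hcomm habS hZ Mt vt hbijt) (LieModule.toEnd ℂ Lt Mt)

theorem rhoN_cart (x : cartExt H jZ jL) :
    rhoN H jZ jL hdirect hcomm habS hZ Mt vt hbijt (x : Lt)
      = LinearMap.mulLeft ℂ (phi H jZ jL hdirect hcomm habS hZ x) := by
  apply LinearMap.ext; intro u
  set w := (PhiEquiv H jZ jL hdirect hcomm habS hZ (Z := Z)).symm u with hw
  have e1 : thetaEq H jZ jL hdirect hcomm habS hZ Mt vt hbijt u
      = betaLin (cartExt H jZ jL) Mt vt w := rfl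
  have h1 : (LieModule.toEnd ℂ Lt Mt) (x : Lt) (betaLin (cartExt H jZ jL) Mt vt w)
      = betaLin (cartExt H jZ jL) Mt vt (ι ℂ x * w) := by
    rw [LieModule.toEnd_apply_apply]
    exact (betaLin_ι_mul (cartExt H jZ jL) Mt vt x w).symm
  show (thetaEq H jZ jL hdirect hcomm habS hZ Mt vt hbijt).symm
      ((LieModule.toEnd ℂ Lt Mt) (x : Lt)
        (thetaEq H jZ jL hdirect hcomm habS hZ Mt vt hbijt u))
      = phi H jZ jL hdirect hcomm habS hZ x * u
  rw [e1, h1]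
  have e2 : (thetaEq H jZ jL hdirect hcomm habS hZ Mt vt hbijt).symm
      (betaLin (cartExt H jZ jL) Mt vt (ι ℂ x * w))
      = Phi H jZ jL hdirect hcomm habS hZ (ι ℂ x * w) := by
    show (PhiEquiv H jZ jL hdirect hcomm habS hZ (Z := Z))
        ((betaEquiv (cartExt H jZ jL) Mt vt hbijt).symm
          ((betaEquiv (cartExt H jZ jL) Mt vt hbijt) (ι ℂ x * w)))
      = Phi H jZ jL hdirect hcomm habS hZ (ι ℂ x * w)
    rw [LinearEquiv.symm_apply_apply]
    rfl
  have e3 : Phi H jZ jL hdirect hcomm habS hZ w = u := by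
    show (PhiEquiv H jZ jL hdirect hcomm habS hZ (Z := Z)) w = u
    rw [hw, LinearEquiv.apply_symm_apply]
  rw [e2, map_mul, e3, Phi, lift_ι_apply]

/-- The augmentation `U(Z) → ℂ`. -/
noncomputable def epsZ : UniversalEnvelopingAlgebra ℂ Z →ₐ[ℂ] ℂ :=
  UniversalEnvelopingAlgebra.lift ℂ (0 : Z →ₗ⁅ℂ⁆ ℂ)

theorem epsZ_ι (z : Z) : epsZ (Z := Z) (ι ℂ z) = 0 := by
  rw [epsZ, lift_ι_apply]; rfl

/-- `ε ⊗ id : U(Z) ⊗ U(h) → U(h)`. -/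
noncomputable def epsL : NN (Z := Z) H →ₐ[ℂ] UniversalEnvelopingAlgebra ℂ H :=
  Algebra.TensorProduct.lift
    ((Algebra.ofId ℂ (UniversalEnvelopingAlgebra ℂ H)).comp (epsZ (Z := Z)))
    (AlgHom.id ℂ _) (fun a b => by
      show _ * _ = _ * _
      simp only [AlgHom.comp_apply, AlgHom.id_apply]
      rw [Algebra.ofId_apply]
      exact Algebra.commutes _ _)

theorem epsL_tmul (a : UniversalEnvelopingAlgebra ℂ Z) (b : UniversalEnvelopingAlgebra ℂ H) :
    epsL H (a ⊗ₜ[ℂ] b) = epsZ (Z := Z) a • b := by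
  rw [epsL, Algebra.TensorProduct.lift_tmul]
  simp only [AlgHom.comp_apply, AlgHom.id_apply]
  rw [Algebra.ofId_apply, ← Algebra.smul_def]

theorem epsL_incl (b : UniversalEnvelopingAlgebra ℂ H) :
    epsL H ((1 : UniversalEnvelopingAlgebra ℂ Z) ⊗ₜ[ℂ] b) = b := by
  rw [epsL_tmul, map_one, one_smul]

/-- The kernel submodule `(ker ε) ⊗ U(h)`. -/
noncomputable def KK : Submodule ℂ (NN (Z := Z) H) :=
  Submodule.span ℂ {n | ∃ (z : Z) (m : NN (Z := Z) H), n = ((ι ℂ z) ⊗ₜ[ℂ] 1) * m}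

include hZ in
theorem central_tmul (z : Z) (c : NN (Z := Z) H) :
    c * ((ι ℂ z) ⊗ₜ[ℂ] 1) = ((ι ℂ z) ⊗ₜ[ℂ] 1) * c := by
  induction c using TensorProduct.induction_on with
  | zero => rw [zero_mul, mul_zero]
  | tmul a b =>
    rw [Algebra.TensorProduct.tmul_mul_tmul, Algebra.TensorProduct.tmul_mul_tmul,
      mul_one, one_mul, uea_comm hZ]
  | add a b ha hb => rw [add_mul, mul_add, ha, hb]

include hZ in
theorem KK_mul_mem (c : NN (Z := Z) H) {n : NN (Z := Z) H} (hn : n ∈ KK H) :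
    c * n ∈ KK H := by
  induction hn using Submodule.span_induction with
  | mem n hn =>
    obtain ⟨z, m, rfl⟩ := hn
    rw [← mul_assoc, central_tmul H hZ, mul_assoc]
    exact Submodule.subset_span ⟨z, c * m, rfl⟩
  | zero => rw [mul_zero]; exact (KK H).zero_mem
  | add a b _ _ ha hb => rw [mul_add]; exact (KK H).add_mem ha hb
  | smul d a _ ha => rw [mul_smul_comm]; exact (KK H).smul_mem d ha

include hZ in
theorem aug_mem_KK (a : UniversalEnvelopingAlgebra ℂ Z) :
    (a - algebraMap ℂ _ (epsZ (Z := Z) a)) ⊗ₜ[ℂ] (1 : UniversalEnvelopingAlgebra ℂ H)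
      ∈ KK H := by
  induction a using uea_induction with
  | halg r =>
    have : epsZ (Z := Z) (algebraMap ℂ _ r) = r := by
      rw [AlgHom.commutes]; rfl
    rw [this, sub_self, TensorProduct.zero_tmul]
    exact (KK H).zero_mem
  | hι z =>
    rw [epsZ_ι, map_zero, sub_zero]
    exact Submodule.subset_span ⟨z, 1, (mul_one _).symm⟩
  | hmul a b ha hb =>
    have key : a * b - algebraMap ℂ _ (epsZ (Z := Z) (a * b))
        = a * (b - algebraMap ℂ _ (epsZ (Z := Z) b))
          + epsZ (Z := Z) b • (a - algebraMap ℂ _ (epsZ (Z := Z) a)) := by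
      rw [map_mul, map_mul, smul_sub, Algebra.smul_def, Algebra.smul_def, mul_sub,
        Algebra.commutes (epsZ (Z := Z) b) a,
        Algebra.commutes (epsZ (Z := Z) b) (algebraMap ℂ _ (epsZ (Z := Z) a))]
      abel
    rw [key, TensorProduct.add_tmul, ← TensorProduct.smul_tmul']
    have h1 : (a * (b - algebraMap ℂ _ (epsZ (Z := Z) b)))
          ⊗ₜ[ℂ] (1 : UniversalEnvelopingAlgebra ℂ H)
        = (a ⊗ₜ[ℂ] 1) * ((b - algebraMap ℂ _ (epsZ (Z := Z) b)) ⊗ₜ[ℂ] 1) := by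
      rw [Algebra.TensorProduct.tmul_mul_tmul, mul_one]
    rw [h1]
    exact (KK H).add_mem (KK_mul_mem H hZ _ hb) ((KK H).smul_mem _ ha)
  | hadd a b ha hb =>
    have key : a + b - algebraMap ℂ _ (epsZ (Z := Z) (a + b))
        = (a - algebraMap ℂ _ (epsZ (Z := Z) a))
          + (b - algebraMap ℂ _ (epsZ (Z := Z) b)) := by
      rw [map_add, map_add]; abel
    rw [key, TensorProduct.add_tmul]
    exact (KK H).add_mem ha hb

include hZ in
theorem sub_incl_mem_KK (n : NN (Z := Z) H) :
    n - Algebra.TensorProduct.includeRight (epsL H n) ∈ KK H := by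
  induction n using TensorProduct.induction_on with
  | zero => rw [map_zero, map_zero, sub_zero]; exact (KK H).zero_mem
  | tmul a b =>
    rw [epsL_tmul, map_smul, Algebra.TensorProduct.includeRight_apply]
    have h1 : a ⊗ₜ[ℂ] b - epsZ (Z := Z) a • ((1 : UniversalEnvelopingAlgebra ℂ Z) ⊗ₜ[ℂ] b)
        = ((1 : UniversalEnvelopingAlgebra ℂ Z) ⊗ₜ[ℂ] b)
          * ((a - algebraMap ℂ _ (epsZ (Z := Z) a))
              ⊗ₜ[ℂ] (1 : UniversalEnvelopingAlgebra ℂ H)) := by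
      rw [Algebra.TensorProduct.tmul_mul_tmul, one_mul, mul_one, TensorProduct.sub_tmul,
        Algebra.algebraMap_eq_smul_one, ← TensorProduct.smul_tmul']
    rw [h1]
    exact KK_mul_mem H hZ _ (aug_mem_KK H hZ a)
  | add x y hx hy =>
    have h2 : x + y - Algebra.TensorProduct.includeRight (epsL H (x + y))
        = (x - Algebra.TensorProduct.includeRight (epsL H x))
          + (y - Algebra.TensorProduct.includeRight (epsL H y)) := by
      rw [map_add, map_add]; abel
    rw [h2]
    exact (KK H).add_mem hx hy

theorem KK_ker {n : NN (Z := Z) H} (hn : n ∈ KK H) : epsL H n = 0 := by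
  induction hn using Submodule.span_induction with
  | mem n hn =>
    obtain ⟨z, m, rfl⟩ := hn
    rw [map_mul, epsL_tmul, epsZ_ι, zero_smul, zero_mul]
  | zero => exact map_zero _
  | add a b _ _ ha hb => rw [map_add, ha, hb, add_zero]
  | smul c a _ ha => rw [map_smul, ha, smul_zero]

theorem rhoN_jZ (z : Z) :
    rhoN H jZ jL hdirect hcomm habS hZ Mt vt hbijt (jZ z)
      = LinearMap.mulLeft ℂ ((ι ℂ z) ⊗ₜ[ℂ] 1) := by
  have h := rhoN_cart H jZ jL hdirect hcomm habS hZ Mt vt hbijt (gZmap H jZ jL z)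
  rw [phi_gZ] at h
  exact h

theorem rhoN_comm (z : Z) (y : L) :
    (rhoN H jZ jL hdirect hcomm habS hZ Mt vt hbijt (jL y))
        ∘ₗ LinearMap.mulLeft ℂ ((ι ℂ z) ⊗ₜ[ℂ] 1)
      = LinearMap.mulLeft ℂ ((ι ℂ z) ⊗ₜ[ℂ] 1)
        ∘ₗ rhoN H jZ jL hdirect hcomm habS hZ Mt vt hbijt (jL y) := by
  have hb : ⁅rhoN H jZ jL hdirect hcomm habS hZ Mt vt hbijt (jZ z),
      rhoN H jZ jL hdirect hcomm habS hZ Mt vt hbijt (jL y)⁆ = 0 := by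
    rw [← (rhoN H jZ jL hdirect hcomm habS hZ Mt vt hbijt).map_lie, hcomm,
      map_zero (rhoN H jZ jL hdirect hcomm habS hZ Mt vt hbijt)]
  rw [LieRing.of_associative_ring_bracket, sub_eq_zero] at hb
  rw [← rhoN_jZ H jZ jL hdirect hcomm habS hZ Mt vt hbijt z, ← Module.End.mul_eq_comp,
    ← Module.End.mul_eq_comp]
  exact hb.symm

theorem KK_stable (y : L) {n : NN (Z := Z) H} (hn : n ∈ KK H) :
    rhoN H jZ jL hdirect hcomm habS hZ Mt vt hbijt (jL y) n ∈ KK H := by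
  induction hn using Submodule.span_induction with
  | mem n hn =>
    obtain ⟨z, m, rfl⟩ := hn
    have hcf := LinearMap.congr_fun (rhoN_comm H jZ jL hdirect hcomm habS hZ Mt vt hbijt z y) m
    simp only [LinearMap.comp_apply, LinearMap.mulLeft_apply] at hcf
    rw [hcf]
    exact Submodule.subset_span ⟨z, _, rfl⟩
  | zero => rw [map_zero]; exact (KK H).zero_mem
  | add a b _ _ ha hb => rw [map_add]; exact (KK H).add_mem ha hb
  | smul c a _ ha => rw [map_smul]; exact (KK H).smul_mem c ha

theorem eps_rhoN (y : L) (n : NN (Z := Z) H) :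
    epsL H (rhoN H jZ jL hdirect hcomm habS hZ Mt vt hbijt (jL y)
        (Algebra.TensorProduct.includeRight (epsL H n)))
      = epsL H (rhoN H jZ jL hdirect hcomm habS hZ Mt vt hbijt (jL y) n) := by
  have hd : Algebra.TensorProduct.includeRight (epsL H n) - n ∈ KK H := by
    have h2 := (KK H).neg_mem (sub_incl_mem_KK H hZ n)
    rw [neg_sub] at h2
    exact h2
  have h3 := KK_stable H jZ jL hdirect hcomm habS hZ Mt vt hbijt y hd
  rw [map_sub] at h3
  have h4 := KK_ker H h3
  rw [map_sub, sub_eq_zero] at h4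
  exact h4

/-- The action of `g` on `U(h)`. -/
noncomputable def tauRep : L →ₗ⁅ℂ⁆ Module.End ℂ (UniversalEnvelopingAlgebra ℂ H) where
  toFun y := (epsL (Z := Z) H).toLinearMap
      ∘ₗ (rhoN H jZ jL hdirect hcomm habS hZ Mt vt hbijt (jL y))
      ∘ₗ (Algebra.TensorProduct.includeRight (R := ℂ)
            (A := UniversalEnvelopingAlgebra ℂ Z)
            (B := UniversalEnvelopingAlgebra ℂ H)).toLinearMap
  map_add' a b := by
    apply LinearMap.ext; intro u
    simp only [LinearMap.comp_apply, jL.map_add,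
      (rhoN H jZ jL hdirect hcomm habS hZ Mt vt hbijt).map_add, LinearMap.add_apply,
      AlgHom.toLinearMap_apply, map_add]
  map_smul' c a := by
    apply LinearMap.ext; intro u
    simp only [LinearMap.comp_apply, jL.map_smul,
      (rhoN H jZ jL hdirect hcomm habS hZ Mt vt hbijt).map_smul, LinearMap.smul_apply,
      AlgHom.toLinearMap_apply, map_smul, RingHom.id_apply]
  map_lie' {a b} := by
    apply LinearMap.ext; intro u
    simp only [LinearMap.comp_apply, AlgHom.toLinearMap_apply]
    rw [jL.map_lie, (rhoN H jZ jL hdirect hcomm habS hZ Mt vt hbijt).map_lie]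
    rw [LieRing.of_associative_ring_bracket, LieRing.of_associative_ring_bracket]
    rw [LinearMap.sub_apply, map_sub, Module.End.mul_apply, Module.End.mul_apply]
    rw [LinearMap.sub_apply, Module.End.mul_apply, Module.End.mul_apply]
    simp only [LinearMap.comp_apply, AlgHom.toLinearMap_apply]
    rw [eps_rhoN H jZ jL hdirect hcomm habS hZ Mt vt hbijt a,
      eps_rhoN H jZ jL hdirect hcomm habS hZ Mt vt hbijt b]

theorem tauRep_H (h : H) :
    tauRep H jZ jL hdirect hcomm habS hZ Mt vt hbijt ((h : L))
      = LinearMap.mulLeft ℂ (ι ℂ h) := by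
  apply LinearMap.ext; intro u
  show epsL H (rhoN H jZ jL hdirect hcomm habS hZ Mt vt hbijt (jL (h : L))
      (Algebra.TensorProduct.includeRight u)) = ι ℂ h * u
  have h1 : rhoN H jZ jL hdirect hcomm habS hZ Mt vt hbijt (jL (h : L))
      = LinearMap.mulLeft ℂ ((1 : UniversalEnvelopingAlgebra ℂ Z) ⊗ₜ[ℂ] ι ℂ h) := by
    have h2 := rhoN_cart H jZ jL hdirect hcomm habS hZ Mt vt hbijt (gHmap H jZ jL h)
    rw [phi_gH] at h2
    exact h2
  rw [h1, Algebra.TensorProduct.includeRight_apply]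
  show epsL H (((1 : UniversalEnvelopingAlgebra ℂ Z) ⊗ₜ[ℂ] ι ℂ h)
      * ((1 : UniversalEnvelopingAlgebra ℂ Z) ⊗ₜ[ℂ] u)) = _
  rw [Algebra.TensorProduct.tmul_mul_tmul, one_mul, epsL_incl]

end Backward

section Assemble
variable {Z L Lt : Type} [LieRing Z] [LieAlgebra ℂ Z] [LieRing L] [LieAlgebra ℂ L]
  [LieRing Lt] [LieAlgebra ℂ Lt]

theorem lmul_eq_mulLeft {A : Type} [Ring A] [Algebra ℂ A] (a : A) :
    Algebra.lmul ℂ A a = LinearMap.mulLeft ℂ a := by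
  apply LinearMap.ext; intro b
  rw [LinearMap.mulLeft_apply, Algebra.coe_lmul_eq_mul, LinearMap.mul_apply']

theorem forward_nonempty (H : LieSubalgebra ℂ L) (jZ : Z →ₗ⁅ℂ⁆ Lt) (jL : L →ₗ⁅ℂ⁆ Lt)
    (hdirect : Function.Bijective fun p : Z × L => jZ p.1 + jL p.2)
    (hcomm : ∀ (z : Z) (x : Lt), ⁅jZ z, x⁆ = 0)
    (habS : ∀ x y : H, ⁅x, y⁆ = 0) (hZ : ∀ z w : Z, ⁅z, w⁆ = 0)
    (o : HObject L H) : Nonempty (HObject Lt (cartExt H jZ jL)) := by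
  letI := o.iAdd; letI := o.iMod; letI := o.iLRM; letI := o.iLM
  obtain ⟨v, hv⟩ := o.free
  have hbij : Function.Bijective ⇑(betaLin H o.M v) := hv
  letI irm : LieRingModule Lt (NN (Z := Z) H) :=
    LieRingModule.compLieHom _ (rhoT H jZ jL hdirect hcomm hZ o.M v hbij)
  letI ilm : LieModule ℂ Lt (NN (Z := Z) H) :=
    LieModule.compLieHom _ (rhoT H jZ jL hdirect hcomm hZ o.M v hbij)
  refine ⟨⟨NN (Z := Z) H, 1, ?_⟩⟩
  have toEnd_eq : ∀ (x : Lt), LieModule.toEnd ℂ Lt (NN (Z := Z) H) x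
      = rhoT H jZ jL hdirect hcomm hZ o.M v hbij x := fun x => rfl
  have key : UniversalEnvelopingAlgebra.lift ℂ
        ((LieModule.toEnd ℂ Lt (NN (Z := Z) H)).comp (cartExt H jZ jL).incl)
      = (Algebra.lmul ℂ (NN (Z := Z) H)).comp (Phi H jZ jL hdirect hcomm habS hZ) := by
    apply UniversalEnvelopingAlgebra.hom_ext
    apply LieHom.ext
    intro x
    show UniversalEnvelopingAlgebra.lift ℂ
        ((LieModule.toEnd ℂ Lt (NN (Z := Z) H)).comp (cartExt H jZ jL).incl) (ι ℂ x)
      = (Algebra.lmul ℂ (NN (Z := Z) H)).comp (Phi H jZ jL hdirect hcomm habS hZ) (ι ℂ x)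
    rw [lift_ι_apply, LieHom.comp_apply, AlgHom.comp_apply, Phi, lift_ι_apply,
      lmul_eq_mulLeft]
    have hincl : (cartExt H jZ jL).incl x = (x : Lt) := rfl
    rw [hincl, toEnd_eq, rhoT_cart H jZ jL hdirect hcomm habS hZ o.M v hbij x]
  have hfun : (fun u : UniversalEnvelopingAlgebra ℂ (cartExt H jZ jL) =>
        (UniversalEnvelopingAlgebra.lift ℂ
          ((LieModule.toEnd ℂ Lt (NN (Z := Z) H)).comp (cartExt H jZ jL).incl) u)
          (1 : NN (Z := Z) H))
      = ⇑(Phi H jZ jL hdirect hcomm habS hZ) := by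
    funext u
    rw [key, AlgHom.comp_apply, lmul_eq_mulLeft, LinearMap.mulLeft_apply, mul_one]
  rw [hfun]
  exact Phi_bijective H jZ jL hdirect hcomm habS hZ

theorem backward_nonempty (H : LieSubalgebra ℂ L) (jZ : Z →ₗ⁅ℂ⁆ Lt) (jL : L →ₗ⁅ℂ⁆ Lt)
    (hdirect : Function.Bijective fun p : Z × L => jZ p.1 + jL p.2)
    (hcomm : ∀ (z : Z) (x : Lt), ⁅jZ z, x⁆ = 0)
    (habS : ∀ x y : H, ⁅x, y⁆ = 0) (hZ : ∀ z w : Z, ⁅z, w⁆ = 0)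
    (o : HObject Lt (cartExt H jZ jL)) : Nonempty (HObject L H) := by
  letI := o.iAdd; letI := o.iMod; letI := o.iLRM; letI := o.iLM
  obtain ⟨vt, hvt⟩ := o.free
  have hbijt : Function.Bijective ⇑(betaLin (cartExt H jZ jL) o.M vt) := hvt
  letI irm : LieRingModule L (UniversalEnvelopingAlgebra ℂ H) :=
    LieRingModule.compLieHom _ (tauRep H jZ jL hdirect hcomm habS hZ o.M vt hbijt)
  letI ilm : LieModule ℂ L (UniversalEnvelopingAlgebra ℂ H) :=
    LieModule.compLieHom _ (tauRep H jZ jL hdirect hcomm habS hZ o.M vt hbijt)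
  refine ⟨⟨UniversalEnvelopingAlgebra ℂ H, 1, ?_⟩⟩
  have toEnd_eq : ∀ (y : L),
      LieModule.toEnd ℂ L (UniversalEnvelopingAlgebra ℂ H) y
        = tauRep H jZ jL hdirect hcomm habS hZ o.M vt hbijt y := fun y => rfl
  have key : UniversalEnvelopingAlgebra.lift ℂ
        ((LieModule.toEnd ℂ L (UniversalEnvelopingAlgebra ℂ H)).comp H.incl)
      = Algebra.lmul ℂ (UniversalEnvelopingAlgebra ℂ H) := by
    apply UniversalEnvelopingAlgebra.hom_ext
    apply LieHom.ext
    intro h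
    show UniversalEnvelopingAlgebra.lift ℂ
        ((LieModule.toEnd ℂ L (UniversalEnvelopingAlgebra ℂ H)).comp H.incl) (ι ℂ h)
      = Algebra.lmul ℂ (UniversalEnvelopingAlgebra ℂ H) (ι ℂ h)
    rw [lift_ι_apply, LieHom.comp_apply, lmul_eq_mulLeft]
    have hincl : H.incl h = (h : L) := rfl
    rw [hincl, toEnd_eq, tauRep_H H jZ jL hdirect hcomm habS hZ o.M vt hbijt h]
  have hfun : (fun u : UniversalEnvelopingAlgebra ℂ H =>
        (UniversalEnvelopingAlgebra.lift ℂ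
          ((LieModule.toEnd ℂ L (UniversalEnvelopingAlgebra ℂ H)).comp H.incl) u)
          (1 : UniversalEnvelopingAlgebra ℂ H))
      = id := by
    funext u
    rw [key, lmul_eq_mulLeft, LinearMap.mulLeft_apply, mul_one]
    rfl
  rw [hfun]
  exact Function.bijective_id

end Assemble


end Lemma14

/-- Lemma 14(3): let `g` be a Kac-Moody algebra with Cartan subalgebra `h`, let `Z`
be an abelian complex Lie algebra and let `g̃ = Z ⊕ g` (with `[Z, g̃] = 0`) with
Cartan subalgebra `h̃ = Z ⊕ h`.  Then `H(g) = ∅` if and only if `H(g̃) = ∅`. -/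
theorem H_empty_iff_ext_H_empty {n : ℕ} (g : GCM n)
    (L : Type) [LieRing L] [LieAlgebra ℂ L] (D : KacMoodyData g L)
    (Z : Type) [LieRing Z] [LieAlgebra ℂ Z] (hZ : ∀ z w : Z, ⁅z, w⁆ = 0)
    (Lt : Type) [LieRing Lt] [LieAlgebra ℂ Lt]
    (jZ : Z →ₗ⁅ℂ⁆ Lt) (jL : L →ₗ⁅ℂ⁆ Lt)
    (hcomm : ∀ (z : Z) (x : Lt), ⁅jZ z, x⁆ = 0)
    (hdirect : Function.Bijective fun p : Z × L => jZ p.1 + jL p.2) :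
    (¬ Nonempty (HObject L D.H)) ↔
      ¬ Nonempty (HObject Lt
        (LieSubalgebra.lieSpan ℂ Lt (Set.range ⇑jZ ∪ ⇑jL '' (D.H : Set L)))) := by
  apply not_congr
  constructor
  · rintro ⟨o⟩
    exact forward_nonempty D.H jZ jL hdirect hcomm D.abelian hZ o
  · rintro ⟨o⟩
    exact backward_nonempty D.H jZ jL hdirect hcomm D.abelian hZ o

end KM
end
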